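/- Let G be a finite abelian group and S a zero-sum free sequence over G (i.e., no nonempty subsequence of S sums to 0). Then the number of distinct subsequence sums of S satisfies |Σ(S)| ≥ |S| + |supp(S)| − 1. -/

import Mathlib

/-- Set of sums of nonempty subsequences of `S`. -/
def subSums {G : Type*} [AddCommMonoid G] (S : Multiset G) : Set G :=
  {x | ∃ T : Multiset G, T ≤ S ∧ T ≠ 0 ∧ T.sum = x}

/-- Set of sums of subsequences of `S` of length exactly `k`. -/
def sumsLen {G : Type*} [AddCommMonoid G] (k : ℕ) (S : Multiset G) : Set G :=
  {x | ∃ T : Multiset G, T ≤ S ∧ Multiset.card T = k ∧ T.sum = x}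

/-- Set of sums of subsequences of `S` of length at least `k`. -/
def sumsGe {G : Type*} [AddCommMonoid G] (k : ℕ) (S : Multiset G) : Set G :=
  {x | ∃ T : Multiset G, T ≤ S ∧ k ≤ Multiset.card T ∧ T.sum = x}


section Aux

variable {G : Type*} [AddCommGroup G] [DecidableEq G]

/-- Finset of sums of nonempty subsequences. -/
def sumsF (S : Multiset G) : Finset G :=
  ((S.powerset.filter (· ≠ 0)).map Multiset.sum).toFinset

lemma mem_sumsF {S : Multiset G} {x : G} :
    x ∈ sumsF S ↔ ∃ T, T ≤ S ∧ T ≠ 0 ∧ T.sum = x := by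
  simp only [sumsF, Multiset.mem_toFinset, Multiset.mem_map, Multiset.mem_filter,
    Multiset.mem_powerset]
  constructor
  · rintro ⟨T, ⟨h1, h2⟩, h3⟩; exact ⟨T, h1, h2, h3⟩
  · rintro ⟨T, h1, h2, h3⟩; exact ⟨T, ⟨h1, h2⟩, h3⟩

lemma sumsF_mono {T S : Multiset G} (h : T ≤ S) : sumsF T ⊆ sumsF S := by
  intro x hx
  rw [mem_sumsF] at hx ⊢
  obtain ⟨U, h1, h2, h3⟩ := hx
  exact ⟨U, h1.trans h, h2, h3⟩

lemma mem_sumsF_of_mem {S : Multiset G} {a : G} (h : a ∈ S) : a ∈ sumsF S := by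
  rw [mem_sumsF]
  exact ⟨{a}, by simpa using h, by simp, by simp⟩

lemma sum_mem_sumsF {S : Multiset G} (h : S ≠ 0) : S.sum ∈ sumsF S :=
  mem_sumsF.mpr ⟨S, le_refl _, h, rfl⟩

/-- total sum is not a sum of a proper subsequence, in a zero-sum free sequence -/
lemma sum_not_mem_sumsF_of_lt {S T : Multiset G} (h0 : (0:G) ∉ sumsF S)
    (hT : T ≤ S) (hne : T ≠ S) : S.sum ∉ sumsF T := by
  intro hx
  obtain ⟨C, hC1, hC2, hC3⟩ := mem_sumsF.mp hx
  have hCS : C ≤ S := hC1.trans hT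
  obtain ⟨U, hU⟩ := Multiset.le_iff_exists_add.mp hCS
  have hU0 : U ≠ 0 := by
    rintro rfl
    rw [add_zero] at hU
    exact hne (le_antisymm hT (hU ▸ hC1))
  have hUsum : U.sum = 0 := by
    have : S.sum = C.sum + U.sum := by rw [hU, Multiset.sum_add]
    rw [hC3] at this
    exact (left_eq_add.mp this)
  exact h0 (mem_sumsF.mpr ⟨U, by rw [hU]; exact le_add_self, hU0, hUsum⟩)

end Aux

section Core

variable {G : Type*} [AddCommGroup G] [Fintype G] [DecidableEq G]

lemma int_core (D : Finset G) (σ u : G) (h0 : (0:G) ∉ D) (hσD : σ ∈ D)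
    (rule : ∀ y : G, y ∈ D ↔ (y = u ∨ (y - u ∈ D ∧ y - u ≠ σ))) :
    ∃ t, 1 ≤ t ∧ t < addOrderOf u ∧ t • u = σ ∧
      ∀ j, t < j → j ≤ addOrderOf u → j • u ∉ D := by
  have huD : u ∈ D := (rule u).mpr (Or.inl rfl)
  have hu0 : u ≠ 0 := fun h => h0 (h ▸ huD)
  have hσ0 : σ ≠ 0 := fun h => h0 (h ▸ hσD)
  have hdpos : 0 < addOrderOf u := addOrderOf_pos u
  have hd0 : (addOrderOf u) • u = 0 := addOrderOf_nsmul_eq_zero u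
  have fwd : ∀ j, 1 ≤ j → (∀ i, 1 ≤ i → i < j → i • u ≠ σ) → j • u ∈ D := by
    intro j
    induction j with
    | zero => intro h; omega
    | succ j IHj =>
      intro _ hno
      by_cases hj : j = 0
      · subst hj; simpa using huD
      · have hjD : j • u ∈ D := IHj (by omega) (fun i h1 h2 => hno i h1 (by omega))
        have hjσ : j • u ≠ σ := hno j (by omega) (by omega)
        refine (rule ((j+1) • u)).mpr (Or.inr ⟨?_, ?_⟩) <;>
          rw [succ_nsmul, add_sub_cancel_right] <;> assumption
  have hexd : ∃ i, 1 ≤ i ∧ i • u = σ ∧ i ≤ addOrderOf u := by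
    by_contra hno
    push_neg at hno
    have hcon : ∀ i, 1 ≤ i → i < addOrderOf u → i • u ≠ σ := by
      intro i h1 h2 h3
      exact absurd (hno i h1 h3) (by omega)
    exact h0 (hd0 ▸ fwd (addOrderOf u) (by omega) hcon)
  have hex : ∃ i, 1 ≤ i ∧ i • u = σ := ⟨hexd.choose, hexd.choose_spec.1, hexd.choose_spec.2.1⟩
  classical
  set t := Nat.find hex with htdef
  obtain ⟨ht1, htσ⟩ := Nat.find_spec hex
  rw [← htdef] at ht1 htσ
  have htd : t < addOrderOf u := by
    have hle : t ≤ addOrderOf u := by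
      obtain ⟨i, hi1, hi2, hi3⟩ := hexd
      exact le_trans (Nat.find_le ⟨hi1, hi2⟩) hi3
    rcases eq_or_lt_of_le hle with h | h
    · exfalso; apply hσ0; rw [← htσ, h, hd0]
    · exact h
  have bwd : ∀ m, 1 ≤ m → t + m ≤ addOrderOf u → (t + m) • u ∉ D := by
    intro m
    induction m with
    | zero => intro h; omega
    | succ m IHm =>
      intro _ hle hmem
      by_cases hm : m = 0
      · subst hm
        rcases (rule ((t+1) • u)).mp hmem with h | ⟨_, h2⟩
        · have h' : t • u = 0 := by
            have h1 : t • u + u = 0 + u := by rw [zero_add, ← succ_nsmul]; exact h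
            exact add_right_cancel h1
          exact hσ0 (by rw [← htσ, h'])
        · exact h2 (by rw [succ_nsmul, add_sub_cancel_right, htσ])
      · have hprev : (t+m) • u ∉ D := IHm (by omega) (by omega)
        rcases (rule ((t+(m+1)) • u)).mp hmem with h | ⟨h1, _⟩
        · have h' : (t+m) • u = 0 := by
            have h1 : (t+m) • u + u = 0 + u := by
              rw [zero_add, ← succ_nsmul]
              exact h
            exact add_right_cancel h1
          have hdvd := addOrderOf_dvd_of_nsmul_eq_zero h'
          have := Nat.le_of_dvd (by omega) hdvd
          omega
        · exact hprev (by rwa [show t+(m+1) = (t+m)+1 from rfl, succ_nsmul,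
            add_sub_cancel_right] at h1)
  exact ⟨t, ht1, htd, htσ, fun j hj1 hj2 => by
    have := bwd (j - t) (by omega) (by omega)
    rwa [show t + (j - t) = j from by omega] at this⟩

lemma int_use1 (D : Finset G) (σ u : G) (h0 : (0:G) ∉ D) (hσD : σ ∈ D)
    (rule : ∀ y : G, y ∈ D ↔ (y = u ∨ (y - u ∈ D ∧ y - u ≠ σ)))
    (hneg : -u ∈ D) : σ = -u := by
  obtain ⟨t, ht1, htd, htσ, hbwd⟩ := int_core D σ u h0 hσD rule
  have hd0 : (addOrderOf u) • u = 0 := addOrderOf_nsmul_eq_zero u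
  have hdm : (addOrderOf u - 1) • u = -u := by
    have h : (addOrderOf u - 1) • u + u = 0 := by
      rw [← succ_nsmul, show addOrderOf u - 1 + 1 = addOrderOf u from by omega]
      exact hd0
    exact eq_neg_of_add_eq_zero_left h
  have hnot : ¬ (t < addOrderOf u - 1) := fun h =>
    hbwd (addOrderOf u - 1) h (by omega) (hdm ▸ hneg)
  have ht : t = addOrderOf u - 1 := by omega
  rw [← htσ, ht, hdm]

lemma int_use2 (D : Finset G) (σ u : G) (h0 : (0:G) ∉ D) (hσD : σ ∈ D)
    (rule : ∀ y : G, y ∈ D ↔ (y = u ∨ (y - u ∈ D ∧ y - u ≠ σ)))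
    (hσ2 : σ = u + u) {x : G} (hx : x ∈ D) (hxv : x = -(u+u)) :
    x = u ∨ x = σ := by
  obtain ⟨t, ht1, htd, htσ, hbwd⟩ := int_core D σ u h0 hσD rule
  have huD : u ∈ D := (rule u).mpr (Or.inl rfl)
  have hu0 : u ≠ 0 := fun h => h0 (h ▸ huD)
  have hσ0 : σ ≠ 0 := fun h => h0 (h ▸ hσD)
  have hd0 : (addOrderOf u) • u = 0 := addOrderOf_nsmul_eq_zero u
  have hσ2' : 2 • u = σ := by rw [two_nsmul]; exact hσ2.symm
  -- t = 2
  have ht2 : t = 2 := by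
    rcases Nat.lt_or_ge t 2 with h | h
    · exfalso
      have ht1' : t = 1 := by omega
      apply hu0
      have hus : u = σ := by rw [← htσ, ht1', one_nsmul]
      exact left_eq_add.mp (hus.trans hσ2)
    · have h' : (t - 2) • u = 0 := by
        have h1 : (t - 2) • u + 2 • u = t • u := by
          rw [← add_nsmul, show t - 2 + 2 = t from by omega]
        rw [htσ, hσ2'] at h1
        exact add_eq_right.mp h1
      have hdvd := addOrderOf_dvd_of_nsmul_eq_zero h'
      rcases Nat.eq_zero_or_pos (t - 2) with h2 | h2
      · omega
      · have := Nat.le_of_dvd h2 hdvd; omega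
  -- d ≥ 3 and x = (d-2) • u
  have hd2 : 2 < addOrderOf u := ht2 ▸ htd
  have hxd : x = (addOrderOf u - 2) • u := by
    have h : (addOrderOf u - 2) • u + 2 • u = 0 := by
      rw [← add_nsmul, show addOrderOf u - 2 + 2 = addOrderOf u from by omega]
      exact hd0
    have h2 : (addOrderOf u - 2) • u = -(2 • u) := eq_neg_of_add_eq_zero_left h
    rw [hxv, show -(u+u) = -(2 • u) from by rw [two_nsmul], ← h2]
  have hnot : ¬ (t < addOrderOf u - 2) := fun h =>
    hbwd (addOrderOf u - 2) h (by omega) (hxd ▸ hx)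
  -- so addOrderOf u ≤ 4
  have hd4 : addOrderOf u ≤ 4 := by omega
  rcases (by omega : addOrderOf u = 3 ∨ addOrderOf u = 4) with h3 | h4
  · left; rw [hxd, h3]; simp
  · right; rw [hxd, h4, ← htσ, ht2]

end Core
section Main

variable {G : Type*} [AddCommGroup G] [Fintype G] [DecidableEq G]

lemma erase_sum_eq {S : Multiset G} {a : G} (h : a ∈ S) :
    (S.erase a).sum = S.sum - a := by
  conv_rhs => rw [← Multiset.cons_erase h, Multiset.sum_cons]
  abel

lemma main_bound : ∀ (n : ℕ) (S : Multiset G), Multiset.card S ≤ n → (0:G) ∉ sumsF S →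
    Multiset.card S + S.toFinset.card ≤ (sumsF S).card + 1 := by
  intro n
  induction n with
  | zero =>
    intro S hS _
    rw [Multiset.card_eq_zero.mp (Nat.le_zero.mp hS)]
    simp
  | succ n IH =>
    intro S hcard h0
    by_cases hle : Multiset.card S ≤ n
    · exact IH S hle h0
    have hn : Multiset.card S = n + 1 := by omega
    by_cases hnd : S.Nodup
    swap
    · -- repeated element case
      obtain ⟨a, ha2⟩ : ∃ a, 2 ≤ S.count a := by
        rw [Multiset.nodup_iff_count_le_one] at hnd
        push_neg at hnd
        exact ⟨hnd.choose, hnd.choose_spec⟩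
      have haS : a ∈ S := by rw [← Multiset.count_pos]; omega
      have hsub : S.erase a ≤ S := Multiset.erase_le a S
      have h0' : (0:G) ∉ sumsF (S.erase a) := fun h => h0 (sumsF_mono hsub h)
      have hc' : Multiset.card (S.erase a) = n := by
        rw [Multiset.card_erase_of_mem haS, hn]; rfl
      have hIH := IH (S.erase a) (by omega) h0'
      have htf : (S.erase a).toFinset = S.toFinset := by
        ext x
        simp only [Multiset.mem_toFinset]
        constructor
        · exact fun h => Multiset.mem_of_le hsub h
        · intro hx
          by_cases hxa : x = a
          · subst hxa; rw [← Multiset.count_pos, Multiset.count_erase_self]; omega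
          · rwa [Multiset.mem_erase_of_ne hxa]
      have hkey : (sumsF (S.erase a)).card + 1 ≤ (sumsF S).card := by
        have hins : (insert (0:G) (sumsF (S.erase a))).card = (sumsF (S.erase a)).card + 1 :=
          Finset.card_insert_of_notMem h0'
        rw [← hins]
        apply Finset.card_le_card_of_injOn (fun x => a + x)
        · intro x hx
          simp only [Finset.coe_insert, Set.mem_insert_iff, Finset.mem_coe] at hx
          rcases hx with rfl | hx
          · simpa using mem_sumsF_of_mem haS
          · obtain ⟨T, h1, h2, h3⟩ := mem_sumsF.mp hx
            refine mem_sumsF.mpr ⟨a ::ₘ T, ?_, by simp, by rw [Multiset.sum_cons, h3]⟩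
            calc a ::ₘ T ≤ a ::ₘ S.erase a := Multiset.cons_le_cons a h1
              _ = S := Multiset.cons_erase haS
        · intro x _ y _ h
          exact add_left_cancel h
      have htfc : (S.erase a).toFinset.card = S.toFinset.card := by rw [htf]
      omega
    · -- squarefree case
      have hk : S.toFinset.card = Multiset.card S := Multiset.toFinset_card_of_nodup hnd
      by_cases hN1 : Multiset.card S = 1
      · obtain ⟨a, rfl⟩ := Multiset.card_eq_one.mp hN1
        have h1 : 0 < (sumsF {a}).card :=
          Finset.card_pos.mpr ⟨a, mem_sumsF_of_mem (by simp)⟩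
        omega
      by_cases hN2 : Multiset.card S = 2
      · obtain ⟨a, b, rfl⟩ := Multiset.card_eq_two.mp hN2
        have hab : a ≠ b := by
          intro h; subst h
          exact (by simp at hnd : ¬ (({a, a} : Multiset G).Nodup)) hnd
        have haD : a ∈ sumsF ({a, b} : Multiset G) := mem_sumsF_of_mem (by simp)
        have hbD : b ∈ sumsF ({a, b} : Multiset G) := mem_sumsF_of_mem (by simp)
        have ha0 : a ≠ 0 := fun h => h0 (h ▸ haD)
        have hb0 : b ≠ 0 := fun h => h0 (h ▸ hbD)
        have habD : a + b ∈ sumsF ({a, b} : Multiset G) := by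
          have := sum_mem_sumsF (S := ({a, b} : Multiset G)) (by simp)
          simpa using this
        have hsubset : ({a, b, a + b} : Finset G) ⊆ sumsF ({a, b} : Multiset G) := by
          intro x hx
          simp only [Finset.mem_insert, Finset.mem_singleton] at hx
          rcases hx with rfl | rfl | rfl <;> assumption
        have h3 : ({a, b, a + b} : Finset G).card = 3 := by
          rw [Finset.card_insert_of_notMem, Finset.card_insert_of_notMem, Finset.card_singleton]
          · simp only [Finset.mem_singleton]
            intro h; exact ha0 (by rwa [right_eq_add] at h)
          · simp only [Finset.mem_insert, Finset.mem_singleton]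
            push_neg
            refine ⟨hab, fun h => hb0 ?_⟩
            rwa [left_eq_add] at h
        have := Finset.card_le_card hsubset
        omega
      -- N ≥ 3
      have hN3 : 3 ≤ Multiset.card S := by omega
      by_contra hcon
      push_neg at hcon
      have hS0 : S ≠ 0 := by
        intro h; rw [h] at hN3; simp at hN3
      have hσD : S.sum ∈ sumsF S := sum_mem_sumsF hS0
      have hD : (sumsF S).card + 2 ≤ 2 * Multiset.card S := by omega
      -- erased facts
      have herase_card : ∀ x ∈ S, Multiset.card (S.erase x) = n := fun x hx => by
        rw [Multiset.card_erase_of_mem hx, hn]; rfl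
      have herase_ne : ∀ x ∈ S, S.erase x ≠ 0 := by
        intro x hx h
        have := herase_card x hx
        rw [h] at this; simp at this; omega
      have herase_mem : ∀ x ∈ S, S.sum - x ∈ sumsF S := by
        intro x hx
        rw [← erase_sum_eq hx]
        exact sumsF_mono (Multiset.erase_le x S) (sum_mem_sumsF (herase_ne x hx))
      -- the rule
      have rule : ∀ a ∈ S, ∀ y : G, y ∈ sumsF S ↔
          (y = a ∨ (y - a ∈ sumsF S ∧ y - a ≠ S.sum)) := by
        intro a haS y
        have hsub : S.erase a ≤ S := Multiset.erase_le a S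
        have h0' : (0:G) ∉ sumsF (S.erase a) := fun h => h0 (sumsF_mono hsub h)
        have hc' : Multiset.card (S.erase a) = n := herase_card a haS
        have hk' : (S.erase a).toFinset.card = n :=
          (Multiset.toFinset_card_of_nodup (hnd.erase a)).trans hc'
        have hIH := IH (S.erase a) (by omega) h0'
        rw [hc', hk'] at hIH
        -- card (sumsF (S.erase a)) ≥ 2n - 1
        have hEcard : 2 * n ≤ (insert (0:G) (sumsF (S.erase a))).card := by
          rw [Finset.card_insert_of_notMem h0']; omega
        have himg : (insert (0:G) (sumsF (S.erase a))).image (a + ·) ⊆ sumsF S := by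
          intro y hy
          obtain ⟨x, hx, rfl⟩ := Finset.mem_image.mp hy
          simp only [Finset.mem_insert] at hx
          rcases hx with rfl | hx
          · simpa using mem_sumsF_of_mem haS
          · obtain ⟨T, h1, h2, h3⟩ := mem_sumsF.mp hx
            refine mem_sumsF.mpr ⟨a ::ₘ T, ?_, by simp, by rw [Multiset.sum_cons, h3]⟩
            calc a ::ₘ T ≤ a ::ₘ S.erase a := Multiset.cons_le_cons a h1
              _ = S := Multiset.cons_erase haS
        have himgcard : ((insert (0:G) (sumsF (S.erase a))).image (a + ·)).card
            = (insert (0:G) (sumsF (S.erase a))).card :=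
          Finset.card_image_of_injective _ (add_right_injective a)
        have heq : (insert (0:G) (sumsF (S.erase a))).image (a + ·) = sumsF S := by
          apply Finset.eq_of_subset_of_card_le himg
          rw [himgcard]
          omega
        have hσnot : S.sum ∉ sumsF (S.erase a) := by
          apply sum_not_mem_sumsF_of_lt h0 hsub
          intro h
          have := herase_card a haS
          rw [h, hn] at this; omega
        have hSig : sumsF (S.erase a) = (sumsF S).erase S.sum := by
          apply Finset.eq_of_subset_of_card_le
          · intro x hx
            exact Finset.mem_erase.mpr ⟨fun h => hσnot (h ▸ hx), sumsF_mono hsub hx⟩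
          · rw [Finset.card_erase_of_mem hσD]
            omega
        constructor
        · intro hy
          rw [← heq] at hy
          obtain ⟨x, hx, rfl⟩ := Finset.mem_image.mp hy
          simp only [Finset.mem_insert] at hx
          rcases hx with rfl | hx
          · left; rw [add_zero]
          · right
            rw [add_sub_cancel_left]
            exact ⟨sumsF_mono hsub hx, fun h => hσnot (h ▸ hx)⟩
        · rintro (rfl | ⟨hyD, hyne⟩)
          · rw [← heq]
            exact Finset.mem_image.mpr ⟨0, Finset.mem_insert_self _ _, by rw [add_zero]⟩
          · rw [← heq]
            refine Finset.mem_image.mpr ⟨y - a, ?_, by abel⟩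
            apply Finset.mem_insert_of_mem
            rw [hSig]
            exact Finset.mem_erase.mpr ⟨hyne, hyD⟩
      -- step 2: find a with a + a = S.sum
      obtain ⟨a, haS, haσ⟩ : ∃ a ∈ S, a + a = S.sum := by
        have hAD : S.toFinset ⊆ sumsF S := fun x hx =>
          mem_sumsF_of_mem (Multiset.mem_toFinset.mp hx)
        have hBD : S.toFinset.image (fun x => S.sum - x) ⊆ sumsF S := by
          intro y hy
          obtain ⟨x, hx, rfl⟩ := Finset.mem_image.mp hy
          exact herase_mem x (Multiset.mem_toFinset.mp hx)
        have hBcard : (S.toFinset.image (fun x => S.sum - x)).card = S.toFinset.card :=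
          Finset.card_image_of_injective _ sub_right_injective
        have hunion := Finset.card_le_card (Finset.union_subset hAD hBD)
        have hie := Finset.card_union_add_card_inter S.toFinset
          (S.toFinset.image (fun x => S.sum - x))
        have hint : 0 < (S.toFinset ∩ S.toFinset.image (fun x => S.sum - x)).card := by
          omega
        obtain ⟨x, hx⟩ := Finset.card_pos.mp hint
        obtain ⟨hxA, hxB⟩ := Finset.mem_inter.mp hx
        have hxS : x ∈ S := Multiset.mem_toFinset.mp hxA
        obtain ⟨b, hb, hbx⟩ := Finset.mem_image.mp hxB
        have hbS : b ∈ S := Multiset.mem_toFinset.mp hb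
        by_cases hxb : x = b
        · refine ⟨b, hbS, ?_⟩
          subst hxb
          exact (sub_eq_iff_eq_add.mp hbx).symm
        · exfalso
          have hbmem : b ∈ S.erase x := (Multiset.mem_erase_of_ne (Ne.symm hxb)).mpr hbS
          apply h0
          refine mem_sumsF.mpr ⟨(S.erase x).erase b, ?_, ?_, ?_⟩
          · exact le_trans (Multiset.erase_le b _) (Multiset.erase_le x S)
          · intro h
            have h1 := Multiset.card_erase_of_mem hbmem
            rw [h, herase_card x hxS] at h1
            simp at h1; omega
          · rw [erase_sum_eq hbmem, erase_sum_eq hxS, ← hbx]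
            abel
      -- pick c
      obtain ⟨c, hc⟩ := Multiset.exists_mem_of_ne_zero (herase_ne a haS)
      have hcS : c ∈ S := Multiset.mem_of_le (Multiset.erase_le a S) hc
      have hca : c ≠ a := fun h => (Multiset.Nodup.notMem_erase hnd) (h ▸ hc)
      have hc0 : c ≠ 0 := fun h => h0 (h ▸ mem_sumsF_of_mem hcS)
      have ha0 : a ≠ 0 := fun h => h0 (h ▸ mem_sumsF_of_mem haS)
      have hσc : S.sum - c ≠ 0 := by
        intro h
        apply h0
        rw [← h]; exact herase_mem c hcS
      have hσa : S.sum - a ≠ 0 := by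
        intro h
        apply h0
        rw [← h]; exact herase_mem a haS
      -- walk down: -c ∈ D
      have h1 : S.sum - c ∈ sumsF S := herase_mem c hcS
      have h1a : S.sum - c ≠ a := by
        intro h
        apply hca
        have h2 : S.sum = a + c := by rw [← h]; abel
        rw [← haσ] at h2
        exact (add_left_cancel h2).symm
      have h2 : S.sum - c - a ∈ sumsF S :=
        (((rule a haS (S.sum - c)).mp h1).resolve_left h1a).1
      have h2a : S.sum - c - a ≠ a := by
        intro h
        apply hc0
        have h3 : S.sum - c = a + a := sub_eq_iff_eq_add.mp h
        have h4 : S.sum = a + a + c := sub_eq_iff_eq_add.mp h3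
        rw [← haσ] at h4
        exact left_eq_add.mp h4
      have h3 : S.sum - c - a - a ∈ sumsF S :=
        (((rule a haS (S.sum - c - a)).mp h2).resolve_left h2a).1
      have hneg : -c ∈ sumsF S := by
        have : S.sum - c - a - a = -c := by rw [← haσ]; abel
        rwa [this] at h3
      -- conclude
      have huse1 : S.sum = -c := int_use1 (sumsF S) S.sum c h0 hσD (rule c hcS) hneg
      have huse2 : c = a ∨ c = S.sum :=
        int_use2 (sumsF S) S.sum a h0 hσD (rule a haS) haσ.symm
          (mem_sumsF_of_mem hcS) (by rw [haσ, huse1]; abel)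
      rcases huse2 with h | h
      · exact hca h
      · apply hσc
        rw [← h]; abel

end Main


theorem stmt0 {G : Type*} [AddCommGroup G] [Fintype G] [DecidableEq G]
    (S : Multiset G) (hS : (0 : G) ∉ subSums S) :
    (subSums S).ncard + 1 ≥ Multiset.card S + S.toFinset.card := by
  have hset : subSums S = ↑(sumsF S) := by
    ext x
    simp only [subSums, Set.mem_setOf_eq, Finset.coe_sort_coe, Finset.mem_coe, mem_sumsF]
  have h0 : (0:G) ∉ sumsF S := by
    intro h
    exact hS (by rw [hset]; exact_mod_cast h)
  have := main_bound (Multiset.card S) S le_rfl h0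
  rw [hset, Set.ncard_coe_finset]
  omega
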